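/- arXiv:0711.4152 — 2 statements merged into one kernel-verified Lean document; each statement's English description precedes it below -/
import Mathlib

section
/- Let G be a finite group, C ≤ G a subgroup, and J ⊆ C a subset invariant under conjugation by N_G(C), such that C ∩ gCg⁻¹ ⊆ J whenever g ∉ N_G(C). Then the conjugates g(C∖J)g⁻¹, as gN_G(C) ranges over the cosets of N_G(C), are pairwise disjoint, and hence |⋃_{g∈G} g(C∖J)g⁻¹| = [G : N_G(C)] · |C∖J|. -/
/-- Finite analogue of the genericity lemma: if `C ∩ C^g ⊆ J` whenever `g ∉ N_G(C)`,
and `J` is invariant under conjugation by `N_G(C)`, then the conjugates of `C \ J`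
by distinct cosets of `N_G(C)` are pairwise disjoint, and the union of all conjugates
of `C \ J` has `[G : N_G(C)] · |C \ J|` elements. -/
theorem card_union_conjugates_of_generic {G : Type*} [Group G] [Finite G]
    (C : Subgroup G) (J : Set G) (hJC : J ⊆ (C : Set G))
    (hJinv : ∀ n ∈ (Subgroup.normalizer (C : Set G)), (fun x => n * x * n⁻¹) '' J = J)
    (hint : ∀ g : G, g ∉ (Subgroup.normalizer (C : Set G)) →
      (C : Set G) ∩ ((fun x => g * x * g⁻¹) '' (C : Set G)) ⊆ J) :
    (∀ g₁ g₂ : G, g₁⁻¹ * g₂ ∉ (Subgroup.normalizer (C : Set G)) →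
      Disjoint ((fun x => g₁ * x * g₁⁻¹) '' ((C : Set G) \ J))
        ((fun x => g₂ * x * g₂⁻¹) '' ((C : Set G) \ J))) ∧
    Nat.card (⋃ g : G, (fun x => g * x * g⁻¹) '' ((C : Set G) \ J))
      = (Subgroup.normalizer (C : Set G)).index * Nat.card ((C : Set G) \ J : Set G) := by
  set N := Subgroup.normalizer (C : Set G) with hN
  have hinj : ∀ g : G, Function.Injective (fun x => g * x * g⁻¹) := by
    intro g x y hxy
    simpa using mul_left_cancel (mul_right_cancel (hxy : g * x * g⁻¹ = g * y * g⁻¹))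
  have hconjC : ∀ n ∈ N, (fun x => n * x * n⁻¹) '' (C : Set G) = (C : Set G) := by
    intro n hn
    ext h
    constructor
    · rintro ⟨x, hx, rfl⟩
      exact (Subgroup.mem_normalizer_iff.mp hn x).mp hx
    · intro hh
      refine ⟨n⁻¹ * h * n, ?_, by group⟩
      have := (Subgroup.mem_normalizer_iff.mp (N.inv_mem hn) h).mp hh
      simpa [mul_assoc] using this
  have hdiff : ∀ n ∈ N, (fun x => n * x * n⁻¹) '' ((C : Set G) \ J) = (C : Set G) \ J := by
    intro n hn
    rw [Set.image_diff (hinj n), hconjC n hn, hJinv n hn]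
  have hdisj : ∀ g₁ g₂ : G, g₁⁻¹ * g₂ ∉ N →
      Disjoint ((fun x => g₁ * x * g₁⁻¹) '' ((C : Set G) \ J))
        ((fun x => g₂ * x * g₂⁻¹) '' ((C : Set G) \ J)) := by
    intro g₁ g₂ hg
    rw [Set.disjoint_left]
    rintro x ⟨a, ⟨haC, haJ⟩, rfl⟩ ⟨b, ⟨hbC, hbJ⟩, hb⟩
    apply haJ
    apply hint (g₁⁻¹ * g₂) hg
    refine ⟨haC, b, hbC, ?_⟩
    have hb' : g₂ * b * g₂⁻¹ = g₁ * a * g₁⁻¹ := hb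
    have := congrArg (fun y => g₁⁻¹ * y * g₁) hb'
    simp only [mul_assoc, inv_mul_cancel_left, mul_inv_cancel, mul_one] at this ⊢
    simpa [mul_assoc] using this
  refine ⟨hdisj, ?_⟩
  -- build a bijection (G ⧸ N) × (C \ J) ≃ union
  set S : Set G := (C : Set G) \ J with hS
  set U : Set G := ⋃ g : G, (fun x => g * x * g⁻¹) '' S with hU
  have hf : ∀ (q : G ⧸ N) (x : S), (Quotient.out q) * (x : G) * (Quotient.out q)⁻¹ ∈ U := by
    intro q x
    exact Set.mem_iUnion.mpr ⟨Quotient.out q, ⟨x, x.2, rfl⟩⟩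
  let f : (G ⧸ N) × S → U := fun p => ⟨_, hf p.1 p.2⟩
  have hfbij : Function.Bijective f := by
    constructor
    · rintro ⟨q, x⟩ ⟨q', x'⟩ hqx
      have heq : (Quotient.out q) * (x : G) * (Quotient.out q)⁻¹
          = (Quotient.out q') * (x' : G) * (Quotient.out q')⁻¹ := congrArg Subtype.val hqx
      by_cases hqq : q = q'
      · subst hqq
        have := hinj (Quotient.out q) heq
        simp [Subtype.ext this]
      · exfalso
        have hnot : (Quotient.out q)⁻¹ * (Quotient.out q') ∉ N := by
          intro hmem
          apply hqq
          have : (QuotientGroup.mk (Quotient.out q) : G ⧸ N)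
              = QuotientGroup.mk (Quotient.out q') := (QuotientGroup.eq).mpr hmem
          simpa using this
        have := (Set.disjoint_left.mp (hdisj _ _ hnot))
          (a := (Quotient.out q) * (x : G) * (Quotient.out q)⁻¹)
          ⟨x, x.2, rfl⟩
        exact this ⟨x', x'.2, heq.symm⟩
    · rintro ⟨y, hy⟩
      obtain ⟨g, x, hx, rfl⟩ := Set.mem_iUnion.mp hy
      set q : G ⧸ N := QuotientGroup.mk g with hq
      have hn : g⁻¹ * Quotient.out q ∈ N := by
        have : (QuotientGroup.mk g : G ⧸ N) = QuotientGroup.mk (Quotient.out q) := by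
          simp [hq]
        exact (QuotientGroup.eq).mp this
      set n : G := g⁻¹ * Quotient.out q with hn'
      have hx' : n⁻¹ * x * n ∈ S := by
        have : n⁻¹ * x * (n⁻¹)⁻¹ ∈ S := by
          rw [← hdiff n⁻¹ (N.inv_mem hn)]
          exact ⟨x, hx, rfl⟩
        simpa using this
      refine ⟨⟨q, ⟨n⁻¹ * x * n, hx'⟩⟩, ?_⟩
      apply Subtype.ext
      show Quotient.out q * (n⁻¹ * x * n) * (Quotient.out q)⁻¹ = g * x * g⁻¹
      have hgq : Quotient.out q = g * n := by
        rw [hn']; group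
      rw [hgq]
      group
  have hcard : Nat.card ((G ⧸ N) × S) = Nat.card U := Nat.card_eq_of_bijective f hfbij
  rw [Nat.card_prod] at hcard
  rw [← hcard]
  rfl
end

section
/- Let G be a finite group in which every Sylow subgroup is abelian. Then the derived subgroup of G intersects the center of G trivially: G' ∩ Z(G) = 1. -/
open Subgroup MonoidHom

private theorem taunt_aux {G : Type*} [Group G] [Finite G] {p : ℕ} (hp : p.Prime)
    (P : Sylow p G) (hcomm : IsMulCommutative (P : Subgroup G))
    {z : G} (hzc : z ∈ Subgroup.center G) (hzd : z ∈ commutator G) :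
    z ^ (P : Subgroup G).index = 1 := by
  haveI : Fact p.Prime := ⟨hp⟩
  haveI : Finite (Sylow p G) := Finite.of_injective _ (fun P Q h => Sylow.ext (congrArg _ h))
  letI : CommGroup (P : Subgroup G) := { (inferInstance : Group (P : Subgroup G)) with mul_comm := hcomm.is_comm.comm }
  let ϕ : G →* (P : Subgroup G) := MonoidHom.transfer (MonoidHom.id (P : Subgroup G))
  have key : ∀ (k : ℕ) (g₀ : G), g₀⁻¹ * z ^ k * g₀ ∈ (P : Subgroup G) →
      g₀⁻¹ * z ^ k * g₀ = z ^ k := by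
    intro k g₀ _
    have := Subgroup.mem_center_iff.mp (Subgroup.pow_mem _ hzc k) g₀⁻¹
    rw [this]
    group
  have h1 : ϕ z = ⟨z ^ (P : Subgroup G).index, transfer_eq_pow_aux z key⟩ :=
    transfer_eq_pow (MonoidHom.id (P : Subgroup G)) z key
  have h2 : ϕ z = 1 := Abelianization.commutator_subset_ker ϕ hzd
  have := h1.symm.trans h2
  exact Subtype.ext_iff.mp this

/-- Taunt's theorem: in a finite group with all Sylow subgroups abelian, the derived
subgroup meets the center trivially. -/
theorem taunt_derived_inter_center {G : Type*} [Group G] [Finite G]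
    (hsyl : ∀ (p : ℕ), p.Prime → ∀ P : Sylow p G, ∀ a b : (P : Subgroup G), a * b = b * a) :
    commutator G ⊓ Subgroup.center G = ⊥ := by
  rw [eq_bot_iff]
  intro z hz
  obtain ⟨hzd, hzc⟩ := hz
  rw [Subgroup.mem_bot]
  by_contra hne
  have hord : 1 < orderOf z := by
    rcases Nat.lt_or_ge 1 (orderOf z) with h | h
    · exact h
    · interval_cases h' : orderOf z
      · exact absurd h' (orderOf_pos z).ne'
      · exact absurd (orderOf_eq_one_iff.mp h') hne
  obtain ⟨p, hp, hpd⟩ := (orderOf z).exists_prime_and_dvd hord.ne'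
  haveI : Fact p.Prime := ⟨hp⟩
  obtain ⟨P⟩ : Nonempty (Sylow p G) := inferInstance
  haveI : Finite (Sylow p G) := Finite.of_injective _ (fun P Q h => Sylow.ext (congrArg _ h))
  have hcomm : IsMulCommutative (P : Subgroup G) := ⟨⟨hsyl p hp P⟩⟩
  have h1 : z ^ (P : Subgroup G).index = 1 := taunt_aux hp P hcomm hzc hzd
  have h2 : orderOf z ∣ (P : Subgroup G).index := orderOf_dvd_of_pow_eq_one h1
  exact P.not_dvd_index' Nat.card_pos.ne' (hpd.trans h2)
end
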